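/- Let B be an ℓ×n real matrix, 1 ≤ k ≤ ℓ ≤ n, and let L = [[L₁₁, 0], [L₂₁, L₂₂]] be a lower triangular matrix orthogonally equivalent to B (i.e., B = Q L Pᵀ with Q, P orthogonal), with L₁₁ of size k×k. If γ = σ_min(L₁₁), ρ = ‖L₂₂‖₂/γ < 1, then σ_j(L₁₁)/σ_j(B) ≥ (1 - ‖L₂₁‖₂²/((1-ρ²)γ²))^{1/2} for 1 ≤ j ≤ k, provided ‖L₂₁‖₂² < (1-ρ²)γ². -/

import Mathlib

open Matrix

noncomputable def sv {m n : ℕ} (A : Matrix (Fin m) (Fin n) ℝ) (j : Fin n) : ℝ :=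
  Real.sqrt
    ((Matrix.isHermitian_conjTranspose_mul_self A).eigenvalues
      (Tuple.sort (Matrix.isHermitian_conjTranspose_mul_self A).eigenvalues (Fin.rev j)))

noncomputable def specNorm {m n : ℕ} (A : Matrix (Fin m) (Fin n) ℝ) : ℝ := ⨆ j, sv A j

noncomputable def smin {k : ℕ} (M : Matrix (Fin k) (Fin k) ℝ) : ℝ := ⨅ j, sv M j

namespace MS
variable {m n : ℕ} (A : Matrix (Fin m) (Fin n) ℝ)

/-- descending sorted eigenvalues of AᵀA -/
noncomputable def dd (j : Fin n) : ℝ :=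
  (Matrix.isHermitian_conjTranspose_mul_self A).eigenvalues
    (Tuple.sort (Matrix.isHermitian_conjTranspose_mul_self A).eigenvalues (Fin.rev j))

/-- re-sorted eigenvectors (descending eigenvalue order), as plain functions -/
noncomputable def w (j : Fin n) : Fin n → ℝ :=
  (WithLp.equiv 2 _) ((Matrix.isHermitian_conjTranspose_mul_self A).eigenvectorBasis
    (Tuple.sort (Matrix.isHermitian_conjTranspose_mul_self A).eigenvalues (Fin.rev j)))

lemma sv_eq_sqrt_dd (j : Fin n) : sv A j = Real.sqrt (dd A j) := rfl

lemma dd_antitone : Antitone (dd A) := by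
  intro i j hij
  exact Tuple.monotone_sort _ (by simpa [Fin.rev_le_rev] using hij)

lemma mulVec_w (j : Fin n) : (Aᴴ * A) *ᵥ w A j = dd A j • w A j :=
  (Matrix.isHermitian_conjTranspose_mul_self A).mulVec_eigenvectorBasis _

lemma w_dot_w (i j : Fin n) : w A i ⬝ᵥ w A j = if i = j then 1 else 0 := by
  have horth := (Matrix.isHermitian_conjTranspose_mul_self A).eigenvectorBasis.orthonormal
  rw [orthonormal_iff_ite] at horth
  have h := horth (Tuple.sort (Matrix.isHermitian_conjTranspose_mul_self A).eigenvalues (Fin.rev i))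
    (Tuple.sort (Matrix.isHermitian_conjTranspose_mul_self A).eigenvalues (Fin.rev j))
  simp only [PiLp.inner_apply, RCLike.inner_apply, starRingEnd_apply, star_trivial] at h
  rw [dotProduct]
  simp only [w, WithLp.equiv_apply]
  convert h using 1
  · exact Finset.sum_congr rfl fun _ _ => mul_comm _ _
  · simp [Equiv.apply_eq_iff_eq, Fin.rev_inj]

lemma expansion (x : Fin n → ℝ) : x = ∑ i, (w A i ⬝ᵥ x) • w A i := by
  classical
  have hb := ((Matrix.isHermitian_conjTranspose_mul_self A).eigenvectorBasis).sum_repr'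
    ((WithLp.equiv 2 (Fin n → ℝ)).symm x)
  have hx : ∀ i, inner ℝ ((Matrix.isHermitian_conjTranspose_mul_self A).eigenvectorBasis i)
      ((WithLp.equiv 2 (Fin n → ℝ)).symm x)
      = ((WithLp.equiv 2 (Fin n → ℝ)) ((Matrix.isHermitian_conjTranspose_mul_self A).eigenvectorBasis i)) ⬝ᵥ x := by
    intro i
    simp [PiLp.inner_apply, RCLike.inner_apply, dotProduct, mul_comm]
  have hb2 := congrArg (⇑(WithLp.linearEquiv 2 ℝ (Fin n → ℝ))) hb
  rw [map_sum] at hb2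
  simp only [_root_.map_smul, hx] at hb2
  have hE : ∀ y : EuclideanSpace ℝ (Fin n), (WithLp.linearEquiv 2 ℝ (Fin n → ℝ)) y
      = (WithLp.equiv 2 (Fin n → ℝ)) y := fun _ => rfl
  simp only [hE] at hb2
  have hx2 : (WithLp.equiv 2 (Fin n → ℝ)) ((WithLp.equiv 2 (Fin n → ℝ)).symm x) = x :=
    (WithLp.equiv 2 (Fin n → ℝ)).apply_symm_apply x
  rw [hx2] at hb2
  have hre := Equiv.sum_comp ((Fin.revPerm).trans
    (Tuple.sort (Matrix.isHermitian_conjTranspose_mul_self A).eigenvalues))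
    (fun t => (((WithLp.equiv 2 (Fin n → ℝ))
      ((Matrix.isHermitian_conjTranspose_mul_self A).eigenvectorBasis t)) ⬝ᵥ x) •
      ((WithLp.equiv 2 (Fin n → ℝ))
      ((Matrix.isHermitian_conjTranspose_mul_self A).eigenvectorBasis t)))
  exact hb2.symm.trans hre.symm

/-- quadratic form ‖Ax‖² -/
noncomputable def Q (x : Fin n → ℝ) : ℝ := (A *ᵥ x) ⬝ᵥ (A *ᵥ x)

lemma dot_self_nonneg (x : Fin n → ℝ) : 0 ≤ x ⬝ᵥ x :=
  Finset.sum_nonneg fun i _ => mul_self_nonneg _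

lemma dot_self_pos {x : Fin n → ℝ} (hx : x ≠ 0) : 0 < x ⬝ᵥ x :=
  lt_of_le_of_ne (dot_self_nonneg x) fun h => hx (dotProduct_self_eq_zero.mp h.symm)

lemma Q_nonneg (x : Fin n → ℝ) : 0 ≤ Q A x := dot_self_nonneg _

lemma Q_eq (x : Fin n → ℝ) : Q A x = x ⬝ᵥ ((Aᴴ * A) *ᵥ x) := by
  rw [← Matrix.mulVec_mulVec, Matrix.dotProduct_mulVec x,
    Matrix.conjTranspose_eq_transpose_of_trivial, Matrix.vecMul_transpose]
  rfl

lemma sum_dotProduct' {ι : Type*} (t : Finset ι) (f : ι → Fin n → ℝ) (v : Fin n → ℝ) :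
    (∑ i ∈ t, f i) ⬝ᵥ v = ∑ i ∈ t, f i ⬝ᵥ v := by
  simp only [dotProduct, Finset.sum_apply, Finset.sum_mul]
  exact Finset.sum_comm

lemma dotProduct_sum' {ι : Type*} (t : Finset ι) (f : ι → Fin n → ℝ) (v : Fin n → ℝ) :
    v ⬝ᵥ (∑ i ∈ t, f i) = ∑ i ∈ t, v ⬝ᵥ f i := by
  simp only [dotProduct, Finset.sum_apply, Finset.mul_sum]
  exact Finset.sum_comm

lemma dot_sum_sum (t : Finset (Fin n)) (c e : Fin n → ℝ) :
    (∑ i ∈ t, c i • w A i) ⬝ᵥ (∑ i ∈ t, e i • w A i) = ∑ i ∈ t, c i * e i := by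
  rw [dotProduct_sum']
  refine Finset.sum_congr rfl fun j hj => ?_
  rw [sum_dotProduct']
  rw [Finset.sum_eq_single j]
  · simp [smul_dotProduct, dotProduct_smul, w_dot_w, mul_comm]
  · intro i _ hij
    simp [smul_dotProduct, dotProduct_smul, w_dot_w, hij]
  · intro h; exact absurd hj h

lemma mem_span_expansion {t : Finset (Fin n)} {x : Fin n → ℝ}
    (hx : x ∈ Submodule.span ℝ (w A '' ↑t)) :
    x = ∑ i ∈ t, (w A i ⬝ᵥ x) • w A i := by
  induction hx using Submodule.span_induction with
  | mem z hz =>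
    obtain ⟨i0, hi0, rfl⟩ := hz
    rw [Finset.sum_eq_single i0]
    · simp [w_dot_w]
    · intro i _ hij; simp [w_dot_w, hij]
    · intro h; exact absurd hi0 h
  | zero => simp
  | add y z _ _ hy hz =>
    conv_lhs => rw [hy, hz]
    rw [← Finset.sum_add_distrib]
    refine Finset.sum_congr rfl fun i _ => ?_
    rw [dotProduct_add, add_smul]
  | smul a y _ hy =>
    conv_lhs => rw [hy]
    rw [Finset.smul_sum]
    refine Finset.sum_congr rfl fun i _ => ?_
    simp [dotProduct_smul, smul_smul]

lemma span_dot_self {t : Finset (Fin n)} {x : Fin n → ℝ}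
    (hx : x ∈ Submodule.span ℝ (w A '' ↑t)) :
    x ⬝ᵥ x = ∑ i ∈ t, (w A i ⬝ᵥ x) ^ 2 := by
  conv_lhs => rw [mem_span_expansion A hx]
  rw [dot_sum_sum]
  exact Finset.sum_congr rfl fun i _ => (sq _).symm

lemma span_Q {t : Finset (Fin n)} {x : Fin n → ℝ}
    (hx : x ∈ Submodule.span ℝ (w A '' ↑t)) :
    Q A x = ∑ i ∈ t, dd A i * (w A i ⬝ᵥ x) ^ 2 := by
  rw [Q_eq]
  conv_lhs => rw [mem_span_expansion A hx]
  have hmv : (Aᴴ * A) *ᵥ (∑ i ∈ t, (w A i ⬝ᵥ x) • w A i)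
      = ∑ i ∈ t, ((w A i ⬝ᵥ x) * dd A i) • w A i := by
    rw [show ∀ y, (Aᴴ * A) *ᵥ y = (Matrix.mulVecLin (Aᴴ * A)) y from fun _ => rfl, map_sum]
    refine Finset.sum_congr rfl fun i _ => ?_
    rw [_root_.map_smul, Matrix.mulVecLin_apply, mulVec_w, smul_smul]
  rw [hmv, dot_sum_sum]
  refine Finset.sum_congr rfl fun i _ => by ring

lemma dd_nonneg (j : Fin n) : 0 ≤ dd A j := by
  have h := Q_eq A (w A j)
  rw [mulVec_w, dotProduct_smul] at h
  have hw : w A j ⬝ᵥ w A j = 1 := by rw [w_dot_w]; simp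
  rw [hw] at h
  have := Q_nonneg A (w A j)
  simpa [h] using this

lemma sv_sq (j : Fin n) : sv A j ^ 2 = dd A j :=
  Real.sq_sqrt (dd_nonneg A j)

lemma sv_nonneg (j : Fin n) : 0 ≤ sv A j := Real.sqrt_nonneg _

lemma finrank_span (t : Finset (Fin n)) :
    Module.finrank ℝ (Submodule.span ℝ (w A '' ↑t)) = t.card := by
  have hli : LinearIndependent ℝ (fun i : {i // i ∈ t} => w A i.1) := by
    rw [Fintype.linearIndependent_iff]
    intro g hg j
    have hdot := congrArg (fun y => y ⬝ᵥ w A j.1) hg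
    rw [sum_dotProduct'] at hdot
    simp only [smul_dotProduct, zero_dotProduct] at hdot
    rw [Finset.sum_eq_single j] at hdot
    · rw [w_dot_w] at hdot; simpa using hdot
    · intro i _ hij
      rw [w_dot_w]
      have : i.1 ≠ j.1 := fun h => hij (Subtype.ext h)
      simp [this]
    · simp
  have himg : w A '' ↑t = Set.range (fun i : {i // i ∈ t} => w A i.1) := by
    ext y
    constructor
    · rintro ⟨i, hi, rfl⟩; exact ⟨⟨i, hi⟩, rfl⟩
    · rintro ⟨⟨i, hi⟩, rfl⟩; exact ⟨i, hi, rfl⟩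
  rw [himg, finrank_span_eq_card hli, Fintype.card_coe]

lemma exists_nonzero_inf (S T : Submodule ℝ (Fin n → ℝ))
    (h : n < Module.finrank ℝ S + Module.finrank ℝ T) : ∃ x, x ∈ S ⊓ T ∧ x ≠ 0 := by
  have hsup : Module.finrank ℝ ↥(S ⊔ T) ≤ n := by
    have := Submodule.finrank_le (S ⊔ T)
    rwa [Module.finrank_fintype_fun_eq_card, Fintype.card_fin] at this
  have hEq := Submodule.finrank_sup_add_finrank_inf_eq S T
  have hpos : 0 < Module.finrank ℝ ↥(S ⊓ T) := by omega
  rw [Module.finrank_pos_iff] at hpos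
  obtain ⟨v, hv⟩ := exists_ne (0 : ↥(S ⊓ T))
  exact ⟨v.1, v.2, fun h0 => hv (Subtype.ext h0)⟩

/-- span of top j+1 eigenvectors -/
noncomputable def topSpan (j : Fin n) : Submodule ℝ (Fin n → ℝ) :=
  Submodule.span ℝ (w A '' ↑(Finset.Iic j))

noncomputable def botSpan (j : Fin n) : Submodule ℝ (Fin n → ℝ) :=
  Submodule.span ℝ (w A '' ↑(Finset.Ici j))

lemma finrank_topSpan (j : Fin n) : Module.finrank ℝ (topSpan A j) = j + 1 := by
  rw [topSpan, finrank_span, Fin.card_Iic]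

lemma finrank_botSpan (j : Fin n) : Module.finrank ℝ (botSpan A j) = n - j := by
  rw [botSpan, finrank_span, Fin.card_Ici]

lemma topSpan_bound (j : Fin n) {x : Fin n → ℝ} (hx : x ∈ topSpan A j) :
    dd A j * (x ⬝ᵥ x) ≤ Q A x := by
  rw [span_Q A hx, span_dot_self A hx, Finset.mul_sum]
  refine Finset.sum_le_sum fun i hi => ?_
  have : dd A j ≤ dd A i := dd_antitone A (Finset.mem_Iic.mp hi)
  nlinarith [sq_nonneg (w A i ⬝ᵥ x)]

lemma botSpan_bound (j : Fin n) {x : Fin n → ℝ} (hx : x ∈ botSpan A j) :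
    Q A x ≤ dd A j * (x ⬝ᵥ x) := by
  rw [span_Q A hx, span_dot_self A hx, Finset.mul_sum]
  refine Finset.sum_le_sum fun i hi => ?_
  have : dd A i ≤ dd A j := dd_antitone A (Finset.mem_Ici.mp hi)
  nlinarith [sq_nonneg (w A i ⬝ᵥ x)]

lemma dd_le_of_subspace (j : Fin n) (T : Submodule ℝ (Fin n → ℝ)) (a : ℝ)
    (hT : n - (j : ℕ) ≤ Module.finrank ℝ T)
    (ha : ∀ x ∈ T, Q A x ≤ a * (x ⬝ᵥ x)) : dd A j ≤ a := by
  obtain ⟨x, hx, hx0⟩ := exists_nonzero_inf (topSpan A j) T (by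
    rw [finrank_topSpan]
    have := j.2
    omega)
  have h1 := topSpan_bound A j hx.1
  have h2 := ha x hx.2
  have h3 := dot_self_pos hx0
  nlinarith

lemma le_dd_of_subspace (j : Fin n) (S : Submodule ℝ (Fin n → ℝ)) (a : ℝ)
    (hS : (j : ℕ) + 1 ≤ Module.finrank ℝ S)
    (ha : ∀ x ∈ S, a * (x ⬝ᵥ x) ≤ Q A x) : a ≤ dd A j := by
  obtain ⟨x, hx, hx0⟩ := exists_nonzero_inf S (botSpan A j) (by
    rw [finrank_botSpan]
    have := j.2
    omega)
  have h1 := botSpan_bound A j hx.2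
  have h2 := ha x hx.1
  have h3 := dot_self_pos hx0
  nlinarith

lemma sv_antitone : Antitone (sv A) := fun i j hij =>
  Real.sqrt_le_sqrt (dd_antitone A hij)

lemma mem_full_span (x : Fin n → ℝ) : x ∈ Submodule.span ℝ (w A '' ↑(Finset.univ : Finset (Fin n))) := by
  rw [expansion A x]
  exact Submodule.sum_mem _ fun i _ => Submodule.smul_mem _ _
    (Submodule.subset_span ⟨i, by simp, rfl⟩)

lemma specNorm_nonneg : 0 ≤ specNorm A := by
  rcases Nat.eq_zero_or_pos n with h | h
  · subst h
    rw [specNorm, Real.iSup_of_isEmpty]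
  · exact le_trans (sv_nonneg A ⟨0, h⟩)
      (le_ciSup (Set.Finite.bddAbove (Set.finite_range _)) _)

lemma specNorm_eq (h : 0 < n) : specNorm A = sv A ⟨0, h⟩ := by
  haveI : Nonempty (Fin n) := ⟨⟨0, h⟩⟩
  refine le_antisymm (ciSup_le fun j => sv_antitone A (by exact Fin.mk_le_of_le_val (Nat.zero_le _))) ?_
  exact le_ciSup (Set.Finite.bddAbove (Set.finite_range _)) _

lemma Q_le_specNorm (x : Fin n → ℝ) : Q A x ≤ specNorm A ^ 2 * (x ⬝ᵥ x) := by
  rcases Nat.eq_zero_or_pos n with h | h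
  · subst h
    have hx : A *ᵥ x = 0 := by
      funext i
      simp [Matrix.mulVec, dotProduct]
    rw [Q, hx]
    have h0 : (0 : Fin m → ℝ) ⬝ᵥ (0 : Fin m → ℝ) = 0 := by simp
    rw [h0]
    have := dot_self_nonneg x
    positivity
  · have hx := mem_full_span A x
    rw [span_Q A hx, span_dot_self A hx, specNorm_eq A h, sv_sq, Finset.mul_sum]
    refine Finset.sum_le_sum fun i _ => ?_
    have : dd A i ≤ dd A ⟨0, h⟩ := dd_antitone A (Fin.mk_le_of_le_val (Nat.zero_le _))
    nlinarith [sq_nonneg (w A i ⬝ᵥ x)]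

lemma dd_le_of_isometry {m1 m2 : ℕ} (A1 : Matrix (Fin m1) (Fin n) ℝ)
    (A2 : Matrix (Fin m2) (Fin n) ℝ) (Φ : (Fin n → ℝ) ≃ₗ[ℝ] (Fin n → ℝ))
    (hdot : ∀ x, Φ x ⬝ᵥ Φ x = x ⬝ᵥ x) (hQ : ∀ x, Q A1 x = Q A2 (Φ x)) (j : Fin n) :
    dd A1 j ≤ dd A2 j := by
  refine dd_le_of_subspace A1 j (Submodule.map (Φ.symm : (Fin n → ℝ) →ₗ[ℝ] (Fin n → ℝ)) (botSpan A2 j)) _ ?_ ?_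
  · rw [LinearEquiv.finrank_map_eq, finrank_botSpan]
  · rintro x ⟨y, hy, rfl⟩
    have hco : ((Φ.symm : (Fin n → ℝ) →ₗ[ℝ] (Fin n → ℝ)) y) = Φ.symm y := rfl
    have e1 : Q A1 ((Φ.symm : (Fin n → ℝ) →ₗ[ℝ] (Fin n → ℝ)) y) = Q A2 y := by
      rw [hco, hQ (Φ.symm y), Φ.apply_symm_apply]
    have e2 : ((Φ.symm : (Fin n → ℝ) →ₗ[ℝ] (Fin n → ℝ)) y) ⬝ᵥ
        ((Φ.symm : (Fin n → ℝ) →ₗ[ℝ] (Fin n → ℝ)) y) = y ⬝ᵥ y := by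
      rw [hco, ← hdot (Φ.symm y), Φ.apply_symm_apply]
    rw [e1, e2]
    exact botSpan_bound A2 j hy

lemma sv_eq_of_isometry {m1 m2 : ℕ} (A1 : Matrix (Fin m1) (Fin n) ℝ)
    (A2 : Matrix (Fin m2) (Fin n) ℝ) (Φ : (Fin n → ℝ) ≃ₗ[ℝ] (Fin n → ℝ))
    (hdot : ∀ x, Φ x ⬝ᵥ Φ x = x ⬝ᵥ x) (hQ : ∀ x, Q A1 x = Q A2 (Φ x)) (j : Fin n) :
    sv A1 j = sv A2 j := by
  have h1 := dd_le_of_isometry A1 A2 Φ hdot hQ j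
  have h2 := dd_le_of_isometry A2 A1 Φ.symm
    (fun y => by rw [← hdot (Φ.symm y), Φ.apply_symm_apply])
    (fun y => by rw [hQ (Φ.symm y), Φ.apply_symm_apply]) j
  rw [sv_eq_sqrt_dd, sv_eq_sqrt_dd, le_antisymm h1 h2]

lemma quad_nonneg (a b c t u : ℝ) (ha : 0 ≤ a) (hc : 0 ≤ c) (h : b ^ 2 ≤ a * c) :
    0 ≤ a * t ^ 2 - 2 * b * t * u + c * u ^ 2 := by
  rcases eq_or_lt_of_le ha with ha0 | ha0
  · have hb : b = 0 := by nlinarith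
    rw [← ha0, hb]
    nlinarith [mul_nonneg hc (sq_nonneg u)]
  · nlinarith [sq_nonneg (a * t - b * u), sq_nonneg u, mul_pos ha0 ha0]

lemma scalar_ineq (γ η ρ sg t u : ℝ) (hγ : 0 < γ) (hη : 0 ≤ η) (hρ : 0 ≤ ρ)
    (hsg : γ ^ 2 ≤ sg) (hD : 0 < (1 - ρ ^ 2) * γ ^ 2 - η ^ 2) :
    sg * t ^ 2 + (η * t + ρ * γ * u) ^ 2 ≤
      sg * ((1 - ρ ^ 2) * γ ^ 2) / ((1 - ρ ^ 2) * γ ^ 2 - η ^ 2) * (t ^ 2 + u ^ 2) := by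
  obtain ⟨A', hA'⟩ : ∃ x, x = (1 - ρ ^ 2) * γ ^ 2 := ⟨_, rfl⟩
  obtain ⟨D, hDdef⟩ : ∃ x, x = A' - η ^ 2 := ⟨_, rfl⟩
  rw [← hA', ← hDdef]
  have hD' : 0 < D := by rw [hDdef, hA']; exact hD
  have hA'pos : 0 < A' := by rw [hA']; nlinarith [sq_nonneg η, hD]
  have hsgpos : 0 < sg := lt_of_lt_of_le (by positivity) hsg
  have hsgD : 0 ≤ sg - D := by nlinarith [sq_nonneg (ρ * γ), sq_nonneg η, hA', hDdef]
  have h4 : 0 ≤ sg * A' - D * (ρ ^ 2 * γ ^ 2 + A') := by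
    have id1 : γ ^ 2 * A' - D * (ρ ^ 2 * γ ^ 2 + A') = η ^ 2 * (ρ ^ 2 * γ ^ 2 + A') := by
      rw [hDdef, hA']; ring
    have h5 : 0 ≤ η ^ 2 * (ρ ^ 2 * γ ^ 2 + A') := by positivity
    nlinarith [mul_le_mul_of_nonneg_right hsg (le_of_lt hA'pos)]
  rw [div_mul_eq_mul_div, le_div_iff₀ hD']
  have key : 0 ≤ (η ^ 2 * (sg - D)) * t ^ 2 - 2 * (η * ρ * γ * D) * t * u
      + (sg * A' - ρ ^ 2 * γ ^ 2 * D) * u ^ 2 := by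
    refine quad_nonneg _ _ _ _ _ ?_ ?_ ?_
    · exact mul_nonneg (sq_nonneg η) hsgD
    · nlinarith [h4, mul_nonneg hD'.le hA'pos.le]
    · have id2 : η ^ 2 * (sg - D) * (sg * A' - ρ ^ 2 * γ ^ 2 * D) - (η * ρ * γ * D) ^ 2
          = η ^ 2 * sg * (sg * A' - D * (ρ ^ 2 * γ ^ 2 + A')) := by ring
      have h5 : 0 ≤ η ^ 2 * sg * (sg * A' - D * (ρ ^ 2 * γ ^ 2 + A')) :=
        mul_nonneg (mul_nonneg (sq_nonneg η) hsgpos.le) h4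
      linarith [id2, h5]
  have h0 : sg * t ^ 2 * (A' - D - η ^ 2) = 0 := by rw [hDdef]; ring
  nlinarith [key, h0]

lemma finrank_map_inj {n1 n2 : ℕ} (f : (Fin n1 → ℝ) →ₗ[ℝ] (Fin n2 → ℝ))
    (hf : Function.Injective f) (p : Submodule ℝ (Fin n1 → ℝ)) :
    Module.finrank ℝ (Submodule.map f p) = Module.finrank ℝ p := by
  have h1 : Submodule.map f p = LinearMap.range (f.comp p.subtype) := by
    rw [LinearMap.range_comp, Submodule.range_subtype]
  rw [h1, LinearMap.finrank_range_of_inj (fun a b hab => Subtype.ext (hf hab))]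

section Blocks

variable {k r s : ℕ} {L11 : Matrix (Fin k) (Fin k) ℝ} {L21 : Matrix (Fin r) (Fin k) ℝ}
  {L22 : Matrix (Fin r) (Fin s) ℝ} {L : Matrix (Fin (k + r)) (Fin (k + s)) ℝ}
  (hL : L = Matrix.reindex finSumFinEquiv finSumFinEquiv (Matrix.fromBlocks L11 0 L21 L22))

include hL

lemma L_entry_11 (a : Fin k) (b : Fin k) : L (Fin.castAdd r a) (Fin.castAdd s b) = L11 a b := by
  rw [hL]; simp

lemma L_entry_12 (a : Fin k) (b : Fin s) : L (Fin.castAdd r a) (Fin.natAdd k b) = 0 := by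
  rw [hL]; simp

lemma L_entry_21 (c : Fin r) (b : Fin k) : L (Fin.natAdd k c) (Fin.castAdd s b) = L21 c b := by
  rw [hL]; simp

lemma L_entry_22 (c : Fin r) (b : Fin s) : L (Fin.natAdd k c) (Fin.natAdd k b) = L22 c b := by
  rw [hL]; simp

lemma L_mulVec_top (x : Fin (k + s) → ℝ) (a : Fin k) :
    (L *ᵥ x) (Fin.castAdd r a) = (L11 *ᵥ (fun b => x (Fin.castAdd s b))) a := by
  rw [Matrix.mulVec, dotProduct, Fin.sum_univ_add]
  simp only [L_entry_11 hL, L_entry_12 hL, zero_mul, Finset.sum_const_zero, add_zero]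
  rfl

lemma L_mulVec_bot (x : Fin (k + s) → ℝ) (c : Fin r) :
    (L *ᵥ x) (Fin.natAdd k c) =
      (L21 *ᵥ (fun b => x (Fin.castAdd s b))) c + (L22 *ᵥ (fun b => x (Fin.natAdd k b))) c := by
  rw [Matrix.mulVec, dotProduct, Fin.sum_univ_add]
  simp only [L_entry_21 hL, L_entry_22 hL]
  rfl

omit hL

lemma dot_split {a b : ℕ} (x y : Fin (a + b) → ℝ) :
    x ⬝ᵥ y = (fun i => x (Fin.castAdd b i)) ⬝ᵥ (fun i => y (Fin.castAdd b i))
      + (fun i => x (Fin.natAdd a i)) ⬝ᵥ (fun i => y (Fin.natAdd a i)) := by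
  rw [dotProduct, Fin.sum_univ_add]
  rfl

include hL in
lemma Q_L_split (x : Fin (k + s) → ℝ) :
    Q L x = Q L11 (fun b => x (Fin.castAdd s b))
      + ((L21 *ᵥ (fun b => x (Fin.castAdd s b)) + L22 *ᵥ (fun b => x (Fin.natAdd k b))) ⬝ᵥ
         (L21 *ᵥ (fun b => x (Fin.castAdd s b)) + L22 *ᵥ (fun b => x (Fin.natAdd k b)))) := by
  rw [Q, dot_split]
  congr 1
  · rw [Q]
    congr 1 <;> · funext a; exact L_mulVec_top hL x a
  · congr 1 <;> · funext c; rw [L_mulVec_bot hL x c]; rfl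

/-- extension by zero on the right -/
noncomputable def iota1 : (Fin k → ℝ) →ₗ[ℝ] (Fin (k + s) → ℝ) where
  toFun x := Fin.append x 0
  map_add' x y := by
    funext i
    refine Fin.addCases (fun a => ?_) (fun b => ?_) i <;>
      simp [Fin.append_left, Fin.append_right]
  map_smul' c x := by
    funext i
    refine Fin.addCases (fun a => ?_) (fun b => ?_) i <;>
      simp [Fin.append_left, Fin.append_right]

noncomputable def iota2 : (Fin s → ℝ) →ₗ[ℝ] (Fin (k + s) → ℝ) where
  toFun y := Fin.append 0 y
  map_add' x y := by
    funext i
    refine Fin.addCases (fun a => ?_) (fun b => ?_) i <;>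
      simp [Fin.append_left, Fin.append_right]
  map_smul' c x := by
    funext i
    refine Fin.addCases (fun a => ?_) (fun b => ?_) i <;>
      simp [Fin.append_left, Fin.append_right]

lemma iota1_apply_cast (x : Fin k → ℝ) (a : Fin k) :
    (iota1 (s := s) x) (Fin.castAdd s a) = x a := Fin.append_left _ _ _

lemma iota1_apply_nat (x : Fin k → ℝ) (b : Fin s) :
    (iota1 (s := s) x) (Fin.natAdd k b) = 0 := Fin.append_right _ _ _

lemma iota2_apply_cast (y : Fin s → ℝ) (a : Fin k) :
    (iota2 (k := k) y) (Fin.castAdd s a) = 0 := Fin.append_left _ _ _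

lemma iota2_apply_nat (y : Fin s → ℝ) (b : Fin s) :
    (iota2 (k := k) y) (Fin.natAdd k b) = y b := Fin.append_right _ _ _

lemma iota1_inj : Function.Injective (iota1 (k := k) (s := s)) := by
  intro x y hxy
  funext a
  have := congrFun hxy (Fin.castAdd s a)
  rwa [iota1_apply_cast, iota1_apply_cast] at this

lemma iota2_inj : Function.Injective (iota2 (k := k) (s := s)) := by
  intro x y hxy
  funext b
  have := congrFun hxy (Fin.natAdd k b)
  rwa [iota2_apply_nat, iota2_apply_nat] at this

lemma extended_inf_bot (T : Submodule ℝ (Fin k → ℝ)) :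
    (Submodule.map (iota1 (s := s)) T) ⊓ (LinearMap.range (iota2 (k := k) (s := s))) = ⊥ := by
  rw [eq_bot_iff]
  rintro w ⟨⟨x, _, rfl⟩, ⟨y, hy⟩⟩
  have hx0 : x = 0 := by
    funext a
    have h1 := congrFun hy (Fin.castAdd s a)
    rw [iota2_apply_cast] at h1
    have h2 : x a = 0 := by rw [← iota1_apply_cast (s := s) x a, ← h1]
    simp [h2]
  rw [hx0, map_zero]
  exact Submodule.zero_mem ⊥

lemma extended_finrank (T : Submodule ℝ (Fin k → ℝ)) :
    Module.finrank ℝ ((Submodule.map (iota1 (s := s)) T) ⊔ (LinearMap.range (iota2 (k := k) (s := s)))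
      : Submodule ℝ (Fin (k + s) → ℝ)) = Module.finrank ℝ T + s := by
  have h := Submodule.finrank_sup_add_finrank_inf_eq (Submodule.map (iota1 (s := s)) T)
    (LinearMap.range (iota2 (k := k) (s := s)))
  rw [extended_inf_bot, finrank_bot] at h
  rw [finrank_map_inj _ iota1_inj] at h
  rw [LinearMap.finrank_range_of_inj iota2_inj, Module.finrank_fintype_fun_eq_card,
    Fintype.card_fin] at h
  omega

lemma extended_mem {T : Submodule ℝ (Fin k → ℝ)} {w : Fin (k + s) → ℝ}
    (hw : w ∈ (Submodule.map (iota1 (s := s)) T) ⊔ (LinearMap.range (iota2 (k := k) (s := s)))) :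
    (fun a => w (Fin.castAdd s a)) ∈ T := by
  rw [Submodule.mem_sup] at hw
  obtain ⟨y, ⟨x, hx, rfl⟩, z, ⟨y2, rfl⟩, rfl⟩ := hw
  have heq : (fun a => (iota1 (s := s) x + iota2 (k := k) y2) (Fin.castAdd s a)) = x := by
    funext a
    simp [Pi.add_apply, iota1_apply_cast, iota2_apply_cast]
  rw [heq]
  exact hx

lemma cauchy_schwarz_dot {p : ℕ} (a b : Fin p → ℝ) :
    a ⬝ᵥ b ≤ Real.sqrt (a ⬝ᵥ a) * Real.sqrt (b ⬝ᵥ b) := by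
  have h := Real.sum_mul_le_sqrt_mul_sqrt Finset.univ a b
  simpa [dotProduct, sq] using h

lemma dot_mulVec_self {p q : ℕ} (M : Matrix (Fin p) (Fin q) ℝ) (hM : Mᵀ * M = 1)
    (y : Fin q → ℝ) : (M *ᵥ y) ⬝ᵥ (M *ᵥ y) = y ⬝ᵥ y := by
  rw [Matrix.dotProduct_mulVec]
  have h1 : M *ᵥ y = y ᵥ* Mᵀ := by rw [Matrix.vecMul_transpose]
  rw [h1, Matrix.vecMul_vecMul, hM, Matrix.vecMul_one]

end Blocks

end MS

set_option maxHeartbeats 2000000 in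
/-- Mathias–Stewart bound: for B orthogonally equivalent to the lower triangular
L = [[L₁₁,0],[L₂₁,L₂₂]], σ_j(L₁₁)/σ_j(B) ≥ √(1 - ‖L₂₁‖₂²/((1-ρ²)γ²)). -/
theorem stmt16 {k r s : ℕ} [NeZero k]
    (B : Matrix (Fin (k + r)) (Fin (k + s)) ℝ)
    (L11 : Matrix (Fin k) (Fin k) ℝ) (L21 : Matrix (Fin r) (Fin k) ℝ)
    (L22 : Matrix (Fin r) (Fin s) ℝ)
    (L : Matrix (Fin (k + r)) (Fin (k + s)) ℝ)
    (hL : L = Matrix.reindex finSumFinEquiv finSumFinEquiv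
      (Matrix.fromBlocks L11 0 L21 L22))
    (hLtri : ∀ (i : Fin (k + r)) (j : Fin (k + s)), (i : ℕ) < (j : ℕ) → L i j = 0)
    (Q : Matrix (Fin (k + r)) (Fin (k + r)) ℝ) (hQ : Qᵀ * Q = 1)
    (P : Matrix (Fin (k + s)) (Fin (k + s)) ℝ) (hP : Pᵀ * P = 1)
    (hB : B = Q * L * Pᵀ)
    (hrho : specNorm L22 / smin L11 < 1)
    (hsmall : specNorm L21 ^ 2 < (1 - (specNorm L22 / smin L11) ^ 2) * smin L11 ^ 2)
    (j : Fin k) :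
    Real.sqrt (1 - specNorm L21 ^ 2 /
        ((1 - (specNorm L22 / smin L11) ^ 2) * smin L11 ^ 2))
      ≤ sv L11 j / sv B (Fin.castAdd s j) := by
  classical
  haveI : Nonempty (Fin k) := ⟨⟨0, Nat.pos_of_ne_zero (NeZero.ne k)⟩⟩
  set γ := smin L11 with hγdef
  set η := specNorm L21 with hηdef
  set ρq := specNorm L22 with hρqdef
  have hγ0 : 0 ≤ γ := le_ciInf fun j' => MS.sv_nonneg L11 j'
  have hη0 : 0 ≤ η := MS.specNorm_nonneg L21
  have hρq0 : 0 ≤ ρq := MS.specNorm_nonneg L22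
  have hγpos : 0 < γ := by
    rcases eq_or_lt_of_le hγ0 with h0 | h
    · exfalso
      rw [← h0] at hsmall
      rw [div_zero] at hsmall
      nlinarith [sq_nonneg η]
    · exact h
  set ρ := ρq / γ with hρdef
  have hρ0 : 0 ≤ ρ := div_nonneg hρq0 hγ0
  have hργ : ρ * γ = ρq := div_mul_cancel₀ ρq (ne_of_gt hγpos)
  have hD : 0 < (1 - ρ ^ 2) * γ ^ 2 - η ^ 2 := by linarith [hsmall]
  have hγle : ∀ j' : Fin k, γ ≤ sv L11 j' := fun j' =>
    ciInf_le (Set.Finite.bddBelow (Set.finite_range _)) j'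
  -- orthogonal invariance
  have hPPT : P * Pᵀ = 1 := mul_eq_one_comm.mp hP
  let Φ : (Fin (k + s) → ℝ) ≃ₗ[ℝ] (Fin (k + s) → ℝ) :=
    LinearEquiv.ofLinear (Matrix.mulVecLin Pᵀ) (Matrix.mulVecLin P)
      (by
        apply LinearMap.ext
        intro x
        show Pᵀ *ᵥ (P *ᵥ x) = x
        rw [Matrix.mulVec_mulVec, hP, Matrix.one_mulVec])
      (by
        apply LinearMap.ext
        intro x
        show P *ᵥ (Pᵀ *ᵥ x) = x
        rw [Matrix.mulVec_mulVec, hPPT, Matrix.one_mulVec])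
  have hΦapp : ∀ x, Φ x = Pᵀ *ᵥ x := fun _ => rfl
  have hdotΦ : ∀ x, (Φ x) ⬝ᵥ (Φ x) = x ⬝ᵥ x := fun x => by
    rw [hΦapp]
    exact MS.dot_mulVec_self Pᵀ (by rw [Matrix.transpose_transpose, hPPT]) x
  have hQB : ∀ x, MS.Q B x = MS.Q L (Φ x) := fun x => by
    rw [hΦapp, MS.Q, MS.Q, hB]
    have hmv : (Q * L * Pᵀ) *ᵥ x = Q *ᵥ (L *ᵥ (Pᵀ *ᵥ x)) := by
      rw [Matrix.mulVec_mulVec, Matrix.mulVec_mulVec, Matrix.mul_assoc]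
    rw [hmv]
    exact MS.dot_mulVec_self Q hQ (L *ᵥ (Pᵀ *ᵥ x))
  have hsvBL : ∀ j'', sv B j'' = sv L j'' := MS.sv_eq_of_isometry B L Φ hdotΦ hQB
  have hjk : (j : ℕ) < k := j.2
  have hj' : ((Fin.castAdd s j : Fin (k + s)) : ℕ) = (j : ℕ) := rfl
  -- lower bound : dd L11 j ≤ dd L (castAdd s j)
  have hlow : MS.dd L11 j ≤ MS.dd L (Fin.castAdd s j) := by
    refine MS.le_dd_of_subspace L (Fin.castAdd s j)
      (Submodule.map (MS.iota1 (s := s)) (MS.topSpan L11 j)) (MS.dd L11 j) ?_ ?_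
    · rw [MS.finrank_map_inj _ MS.iota1_inj, MS.finrank_topSpan, hj']
    · rintro x ⟨x0, hx0, rfl⟩
      have hc : (fun b => (MS.iota1 (s := s) x0) (Fin.castAdd s b)) = x0 :=
        funext (MS.iota1_apply_cast x0)
      have hn : (fun b => (MS.iota1 (s := s) x0) (Fin.natAdd k b)) = (0 : Fin s → ℝ) :=
        funext (MS.iota1_apply_nat x0)
      rw [MS.Q_L_split hL, MS.dot_split, hc, hn]
      have h1 := MS.topSpan_bound L11 j hx0
      have h2 := MS.dot_self_nonneg (L21 *ᵥ x0 + L22 *ᵥ (0 : Fin s → ℝ))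
      have h3 : (0 : Fin s → ℝ) ⬝ᵥ (0 : Fin s → ℝ) = 0 := by simp
      rw [h3]
      linarith [h1, h2]
  have hsvlow : sv L11 j ≤ sv L (Fin.castAdd s j) := by
    rw [MS.sv_eq_sqrt_dd, MS.sv_eq_sqrt_dd]
    exact Real.sqrt_le_sqrt hlow
  have hsvLpos : 0 < sv L (Fin.castAdd s j) := lt_of_lt_of_le hγpos
    (le_trans (hγle j) hsvlow)
  have hsg : γ ^ 2 ≤ MS.dd L11 j := by
    have h1 := hγle j
    have h2 := MS.sv_sq L11 j
    nlinarith [MS.sv_nonneg L11 j]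
  -- main bound
  have hmain : MS.dd L (Fin.castAdd s j) ≤
      MS.dd L11 j * ((1 - ρ ^ 2) * γ ^ 2) / ((1 - ρ ^ 2) * γ ^ 2 - η ^ 2) := by
    refine MS.dd_le_of_subspace L (Fin.castAdd s j)
      ((Submodule.map (MS.iota1 (s := s)) (MS.botSpan L11 j)) ⊔
        LinearMap.range (MS.iota2 (k := k) (s := s))) _ ?_ ?_
    · rw [MS.extended_finrank, MS.finrank_botSpan, hj']
      omega
    · intro x hx
      have hx1 : (fun b => x (Fin.castAdd s b)) ∈ MS.botSpan L11 j := MS.extended_mem hx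
      have ht2 : (Real.sqrt ((fun b => x (Fin.castAdd s b)) ⬝ᵥ (fun b => x (Fin.castAdd s b)))) ^ 2
          = (fun b => x (Fin.castAdd s b)) ⬝ᵥ (fun b => x (Fin.castAdd s b)) :=
        Real.sq_sqrt (MS.dot_self_nonneg _)
      have hu2 : (Real.sqrt ((fun b => x (Fin.natAdd k b)) ⬝ᵥ (fun b => x (Fin.natAdd k b)))) ^ 2
          = (fun b => x (Fin.natAdd k b)) ⬝ᵥ (fun b => x (Fin.natAdd k b)) :=
        Real.sq_sqrt (MS.dot_self_nonneg _)
      set t := Real.sqrt ((fun b => x (Fin.castAdd s b)) ⬝ᵥ (fun b => x (Fin.castAdd s b))) with htd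
      set u := Real.sqrt ((fun b => x (Fin.natAdd k b)) ⬝ᵥ (fun b => x (Fin.natAdd k b))) with hud
      have ht0 : 0 ≤ t := Real.sqrt_nonneg _
      have hu0 : 0 ≤ u := Real.sqrt_nonneg _
      have hQ1 : MS.Q L11 (fun b => x (Fin.castAdd s b)) ≤ MS.dd L11 j * t ^ 2 := by
        rw [ht2]
        exact MS.botSpan_bound L11 j hx1
      have ha : (L21 *ᵥ (fun b => x (Fin.castAdd s b))) ⬝ᵥ (L21 *ᵥ (fun b => x (Fin.castAdd s b)))
          ≤ (η * t) ^ 2 := by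
        have h := MS.Q_le_specNorm L21 (fun b => x (Fin.castAdd s b))
        rw [MS.Q] at h
        calc (L21 *ᵥ (fun b => x (Fin.castAdd s b))) ⬝ᵥ (L21 *ᵥ (fun b => x (Fin.castAdd s b)))
            ≤ η ^ 2 * ((fun b => x (Fin.castAdd s b)) ⬝ᵥ (fun b => x (Fin.castAdd s b))) := h
          _ = (η * t) ^ 2 := by rw [← ht2]; ring
      have hb : (L22 *ᵥ (fun b => x (Fin.natAdd k b))) ⬝ᵥ (L22 *ᵥ (fun b => x (Fin.natAdd k b)))
          ≤ (ρ * γ * u) ^ 2 := by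
        have h := MS.Q_le_specNorm L22 (fun b => x (Fin.natAdd k b))
        rw [MS.Q] at h
        calc (L22 *ᵥ (fun b => x (Fin.natAdd k b))) ⬝ᵥ (L22 *ᵥ (fun b => x (Fin.natAdd k b)))
            ≤ ρq ^ 2 * ((fun b => x (Fin.natAdd k b)) ⬝ᵥ (fun b => x (Fin.natAdd k b))) := h
          _ = (ρ * γ * u) ^ 2 := by rw [← hu2, hργ]; ring
      have hsqa : Real.sqrt ((L21 *ᵥ (fun b => x (Fin.castAdd s b))) ⬝ᵥ
          (L21 *ᵥ (fun b => x (Fin.castAdd s b)))) ≤ η * t := by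
        have h1 : Real.sqrt ((η * t) ^ 2) = η * t := Real.sqrt_sq (by positivity)
        rw [← h1]
        exact Real.sqrt_le_sqrt ha
      have hsqb : Real.sqrt ((L22 *ᵥ (fun b => x (Fin.natAdd k b))) ⬝ᵥ
          (L22 *ᵥ (fun b => x (Fin.natAdd k b)))) ≤ ρ * γ * u := by
        have h1 : Real.sqrt ((ρ * γ * u) ^ 2) = ρ * γ * u := Real.sqrt_sq (by positivity)
        rw [← h1]
        exact Real.sqrt_le_sqrt hb
      have hab : (L21 *ᵥ (fun b => x (Fin.castAdd s b))) ⬝ᵥ (L22 *ᵥ (fun b => x (Fin.natAdd k b)))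
          ≤ (η * t) * (ρ * γ * u) := by
        refine le_trans (MS.cauchy_schwarz_dot _ _) ?_
        exact mul_le_mul hsqa hsqb (Real.sqrt_nonneg _) (by positivity)
      have hcross : ((L21 *ᵥ (fun b => x (Fin.castAdd s b)) + L22 *ᵥ (fun b => x (Fin.natAdd k b))) ⬝ᵥ
          (L21 *ᵥ (fun b => x (Fin.castAdd s b)) + L22 *ᵥ (fun b => x (Fin.natAdd k b))))
          ≤ (η * t + ρ * γ * u) ^ 2 := by
        rw [add_dotProduct, dotProduct_add, dotProduct_add]
        have hcomm : (L22 *ᵥ (fun b => x (Fin.natAdd k b))) ⬝ᵥ (L21 *ᵥ (fun b => x (Fin.castAdd s b)))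
            = (L21 *ᵥ (fun b => x (Fin.castAdd s b))) ⬝ᵥ (L22 *ᵥ (fun b => x (Fin.natAdd k b))) :=
          dotProduct_comm _ _
        rw [hcomm]
        nlinarith [ha, hb, hab]
      have hscal := MS.scalar_ineq γ η ρ (MS.dd L11 j) t u hγpos hη0 hρ0 hsg hD
      rw [MS.Q_L_split hL x, MS.dot_split x x, ← ht2, ← hu2]
      linarith [hQ1, hcross, hscal]
  -- final algebra
  have hBL : sv B (Fin.castAdd s j) = sv L (Fin.castAdd s j) := hsvBL _
  have hsvBpos : 0 < sv B (Fin.castAdd s j) := by rw [hBL]; exact hsvLpos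
  have hA'pos : 0 < (1 - ρ ^ 2) * γ ^ 2 := by nlinarith [sq_nonneg η]
  have hsv2 : sv B (Fin.castAdd s j) ^ 2 ≤ (sv L11 j) ^ 2 *
      (((1 - ρ ^ 2) * γ ^ 2) / ((1 - ρ ^ 2) * γ ^ 2 - η ^ 2)) := by
    rw [hBL, MS.sv_sq]
    calc MS.dd L (Fin.castAdd s j)
        ≤ MS.dd L11 j * ((1 - ρ ^ 2) * γ ^ 2) / ((1 - ρ ^ 2) * γ ^ 2 - η ^ 2) := hmain
      _ = (sv L11 j) ^ 2 * (((1 - ρ ^ 2) * γ ^ 2) / ((1 - ρ ^ 2) * γ ^ 2 - η ^ 2)) := by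
          rw [MS.sv_sq]; ring
  have hgoalrw : 1 - η ^ 2 / ((1 - ρ ^ 2) * γ ^ 2)
      = ((1 - ρ ^ 2) * γ ^ 2 - η ^ 2) / ((1 - ρ ^ 2) * γ ^ 2) := by
    rw [eq_div_iff hA'pos.ne', sub_mul, div_mul_cancel₀ _ hA'pos.ne', one_mul]
  rw [hgoalrw, le_div_iff₀ hsvBpos]
  have h1 : sv B (Fin.castAdd s j) ≤ sv L11 j *
      Real.sqrt (((1 - ρ ^ 2) * γ ^ 2) / ((1 - ρ ^ 2) * γ ^ 2 - η ^ 2)) := by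
    have h2 : sv B (Fin.castAdd s j) = Real.sqrt (sv B (Fin.castAdd s j) ^ 2) :=
      (Real.sqrt_sq hsvBpos.le).symm
    rw [h2]
    calc Real.sqrt (sv B (Fin.castAdd s j) ^ 2)
        ≤ Real.sqrt ((sv L11 j) ^ 2 * (((1 - ρ ^ 2) * γ ^ 2) / ((1 - ρ ^ 2) * γ ^ 2 - η ^ 2))) :=
          Real.sqrt_le_sqrt hsv2
      _ = sv L11 j * Real.sqrt (((1 - ρ ^ 2) * γ ^ 2) / ((1 - ρ ^ 2) * γ ^ 2 - η ^ 2)) := by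
          rw [Real.sqrt_mul (sq_nonneg _), Real.sqrt_sq (MS.sv_nonneg L11 j)]
  calc Real.sqrt (((1 - ρ ^ 2) * γ ^ 2 - η ^ 2) / ((1 - ρ ^ 2) * γ ^ 2)) * sv B (Fin.castAdd s j)
      ≤ Real.sqrt (((1 - ρ ^ 2) * γ ^ 2 - η ^ 2) / ((1 - ρ ^ 2) * γ ^ 2)) *
        (sv L11 j * Real.sqrt (((1 - ρ ^ 2) * γ ^ 2) / ((1 - ρ ^ 2) * γ ^ 2 - η ^ 2))) :=
        mul_le_mul_of_nonneg_left h1 (Real.sqrt_nonneg _)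
    _ = sv L11 j * (Real.sqrt (((1 - ρ ^ 2) * γ ^ 2 - η ^ 2) / ((1 - ρ ^ 2) * γ ^ 2)) *
        Real.sqrt (((1 - ρ ^ 2) * γ ^ 2) / ((1 - ρ ^ 2) * γ ^ 2 - η ^ 2))) := by ring
    _ = sv L11 j := by
        rw [← Real.sqrt_mul (by positivity)]
        rw [show (((1 - ρ ^ 2) * γ ^ 2 - η ^ 2) / ((1 - ρ ^ 2) * γ ^ 2)) *
          (((1 - ρ ^ 2) * γ ^ 2) / ((1 - ρ ^ 2) * γ ^ 2 - η ^ 2)) = 1 by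
            field_simp; exact div_self (ne_of_gt (by nlinarith))]
        simp
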